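/- Let G be a graph with minimum degree δ ≥ k. Then γ_k(G) ≤ (1 − δ'/(b^{1/δ'} (1+δ')^{1+1/δ'})) · n, where δ' = δ − k + 1, b = C(δ, k−1) is the binomial coefficient, and n = |V(G)|. -/

import Mathlib

def kDominating {V : Type*} (G : SimpleGraph V) (k : ℕ) (X : Set V) : Prop :=
  ∀ v ∉ X, k ≤ (G.neighborSet v ∩ X).ncard

noncomputable def kDominationNumber {V : Type*} (G : SimpleGraph V) (k : ℕ) : ℕ :=
  sInf {n | ∃ X : Set V, kDominating G k X ∧ X.ncard = n}


open Finset

section Weights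
variable {V : Type*} [DecidableEq V] (p q : ℝ)

/-- weight of a configuration `A` restricted to ground set `s` -/
noncomputable def Wt (s A : Finset V) : ℝ := ∏ v ∈ s, (if v ∈ A then p else q)

lemma Wt_eq_pow {s A : Finset V} (hA : A ⊆ s) :
    Wt p q s A = p ^ A.card * q ^ (s.card - A.card) := by
  rw [Wt, ← Finset.prod_filter_mul_prod_filter_not s (· ∈ A)]
  have h1 : s.filter (· ∈ A) = A := by
    ext x; simp only [mem_filter]; exact ⟨fun h => h.2, fun h => ⟨hA h, h⟩⟩
  have h2 : s.filter (¬ · ∈ A) = s \ A := by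
    ext x; simp [mem_sdiff]
  rw [prod_congr h1 (fun x hx => if_pos hx),
      prod_congr h2 (fun x hx => if_neg (mem_sdiff.1 hx).2),
      prod_const, prod_const, card_sdiff_of_subset hA]

lemma sum_Wt (s : Finset V) : ∑ A ∈ s.powerset, Wt p q s A = (p + q) ^ s.card := by
  rw [← prod_const, prod_add]
  refine sum_congr rfl fun A hA => ?_
  rw [mem_powerset] at hA
  rw [Wt_eq_pow p q hA, prod_const, prod_const, card_sdiff_of_subset hA]

lemma Wt_inter (s A : Finset V) : Wt p q s A = Wt p q s (A ∩ s) := by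
  refine prod_congr rfl fun v hv => ?_
  by_cases h : v ∈ A <;> simp [h, hv]

lemma Wt_split {s T : Finset V} (hT : T ⊆ s) (A : Finset V) :
    Wt p q s A = Wt p q T A * Wt p q (s \ T) A := by
  rw [Wt, Wt, Wt, ← prod_union (disjoint_sdiff), union_sdiff_of_subset hT]

lemma sum_Wt_factor [Fintype V] (hpq : p + q = 1) (T : Finset V) (F : Finset V → ℝ) :
    ∑ A ∈ (univ : Finset V).powerset, Wt p q univ A * F (A ∩ T) =
      ∑ S ∈ T.powerset, Wt p q T S * F S := by
  have step1 :
      ∑ A ∈ (univ : Finset V).powerset, Wt p q univ A * F (A ∩ T) =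
        ∑ x ∈ T.powerset ×ˢ (univ \ T).powerset,
          (Wt p q T x.1 * F x.1) * Wt p q (univ \ T) x.2 := by
    refine sum_nbij' (fun A => (A ∩ T, A \ T)) (fun x => x.1 ∪ x.2) ?_ ?_ ?_ ?_ ?_
    · intro A _; simp [mem_product, inter_subset_right, sdiff_subset,
        subset_sdiff, disjoint_sdiff_inter, sdiff_disjoint]
    · intro x _; simp
    · intro A _
      simp only []
      rw [union_comm, sdiff_union_inter]
    · rintro ⟨S, B⟩ hx
      simp only [mem_product, mem_powerset] at hx
      obtain ⟨hS, hB⟩ := hx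
      have hBT : Disjoint B T := (subset_sdiff.1 hB).2
      simp only [Prod.mk.injEq]
      constructor
      · ext x
        simp only [mem_inter, mem_union]
        constructor
        · rintro ⟨h1 | h1, h2⟩
          · exact h1
          · exact absurd h2 (disjoint_left.1 hBT h1)
        · intro h; exact ⟨Or.inl h, hS h⟩
      · ext x
        simp only [mem_sdiff, mem_union]
        constructor
        · rintro ⟨h1 | h1, h2⟩
          · exact absurd (hS h1) h2
          · exact h1
        · intro h; exact ⟨Or.inr h, disjoint_left.1 hBT h⟩
    · intro A _
      rw [Wt_split p q (subset_univ T) A, Wt_inter p q T A, Wt_inter p q (univ \ T) A]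
      have : A ∩ (univ \ T) = A \ T := by ext x; simp
      rw [this]; ring
  rw [step1, sum_product]
  refine sum_congr rfl fun S hS => ?_
  simp only []
  rw [← mul_sum, sum_Wt, hpq, one_pow, mul_one]

lemma binom_tail_ineq {p q : ℝ} (δ k : ℕ) (hk : 1 ≤ k) (hkδ : k ≤ δ)
    (hp : 0 ≤ p) (hq : 0 ≤ q) (hpq : p + q = 1) :
    ∑ i ∈ range k, (δ.choose i : ℝ) * p ^ i * q ^ (δ - i) ≤
      (δ.choose (k - 1) : ℝ) * q ^ (δ - k + 1) := by
  have hsum : ∑ i ∈ range k, ((k-1).choose i : ℝ) * p ^ i * q ^ (k - 1 - i) = 1 := by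
    have := add_pow p q (k - 1)
    rw [hpq, one_pow] at this
    rw [show k = (k - 1) + 1 from (Nat.succ_pred_eq_of_pos hk).symm]
    simp only [Nat.add_sub_cancel]
    exact (sum_congr rfl fun i hi => by ring).trans this.symm
  calc ∑ i ∈ range k, (δ.choose i : ℝ) * p ^ i * q ^ (δ - i)
      ≤ ∑ i ∈ range k, ((δ.choose (k-1) : ℝ) * q ^ (δ - k + 1)) *
          (((k-1).choose i : ℝ) * p ^ i * q ^ (k - 1 - i)) := by
        refine sum_le_sum fun i hi => ?_
        rw [mem_range] at hi
        have hik : i ≤ k - 1 := Nat.le_pred_of_lt hi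
        have hδk : k - 1 ≤ δ := le_trans (Nat.pred_le k) hkδ
        have hchoose : (δ.choose i : ℝ) ≤ (δ.choose (k-1) : ℝ) * ((k-1).choose i : ℝ) := by
          have h1 := Nat.choose_mul (n := δ) hik
          have : δ.choose i ≤ δ.choose (k-1) * (k-1).choose i := by
            rw [h1]; exact Nat.le_mul_of_pos_right _ (Nat.choose_pos (Nat.sub_le_sub_right hδk i))
          exact_mod_cast this
        have hqpow : q ^ (δ - i) = q ^ (δ - k + 1) * q ^ (k - 1 - i) := by
          rw [← pow_add]
          congr 1
          omega
        rw [hqpow]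
        have hnn : 0 ≤ p ^ i * (q ^ (δ - k + 1) * q ^ (k - 1 - i)) :=
          mul_nonneg (pow_nonneg hp _) (mul_nonneg (pow_nonneg hq _) (pow_nonneg hq _))
        calc (δ.choose i : ℝ) * p ^ i * (q ^ (δ - k + 1) * q ^ (k - 1 - i))
            ≤ ((δ.choose (k-1) : ℝ) * ((k-1).choose i : ℝ)) * (p ^ i * (q ^ (δ - k + 1) * q ^ (k - 1 - i))) := by
              rw [mul_assoc]
              exact mul_le_mul_of_nonneg_right hchoose hnn
          _ = (δ.choose (k-1) : ℝ) * q ^ (δ - k + 1) * (((k-1).choose i : ℝ) * p ^ i * q ^ (k - 1 - i)) := by ring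
    _ = (δ.choose (k - 1) : ℝ) * q ^ (δ - k + 1) := by rw [← mul_sum, hsum, mul_one]

lemma Wt_nonneg {p q : ℝ} (hp : 0 ≤ p) (hq : 0 ≤ q) (s A : Finset V) :
    0 ≤ Wt p q s A :=
  prod_nonneg fun v _ => by by_cases h : v ∈ A <;> simp [h, hp, hq]

lemma sum_Wt_card_lt {p q : ℝ} (N' : Finset V) (k : ℕ) :
    ∑ S ∈ N'.powerset.filter (fun S => S.card < k), Wt p q N' S =
      ∑ i ∈ range k, (N'.card.choose i : ℝ) * p ^ i * q ^ (N'.card - i) := by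
  rw [← sum_fiberwise_of_maps_to (g := Finset.card) (t := range k)
    (fun S hS => mem_range.2 (mem_filter.1 hS).2)]
  refine sum_congr rfl fun i hi => ?_
  rw [mem_range] at hi
  have hfib : (N'.powerset.filter (fun S => S.card < k)).filter (fun S => S.card = i) =
      N'.powersetCard i := by
    rw [powersetCard_eq_filter, filter_filter]
    exact filter_congr fun S hS => by
      constructor
      · rintro ⟨_, h⟩; exact h
      · intro h; exact ⟨h ▸ hi, h⟩
  rw [hfib]
  have : ∀ S ∈ N'.powersetCard i, Wt p q N' S = p ^ i * q ^ (N'.card - i) := by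
    intro S hS
    obtain ⟨hsub, hcard⟩ := mem_powersetCard.1 hS
    rw [Wt_eq_pow p q hsub, hcard]
  rw [sum_congr rfl this, sum_const, card_powersetCard, nsmul_eq_mul, mul_assoc]

end Weights

open SimpleGraph in
lemma prob_undercover {V : Type*} [Fintype V] [DecidableEq V] {p q : ℝ}
    (hp : 0 ≤ p) (hq : 0 ≤ q) (hpq : p + q = 1)
    (G : SimpleGraph V) [DecidableRel G.Adj] (k : ℕ) (hk : 1 ≤ k)
    (hδ : k ≤ G.minDegree) (v : V) :
    ∑ A ∈ (univ : Finset V).powerset, Wt p q univ A *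
        (if v ∉ A ∧ (G.neighborFinset v ∩ A).card < k then (1:ℝ) else 0) ≤
      q * ((G.minDegree.choose (k - 1) : ℝ) * q ^ (G.minDegree - k + 1)) := by
  set δ := G.minDegree with hδdef
  -- pick a sub-neighborhood of size exactly δ
  have hdeg : δ ≤ (G.neighborFinset v).card := by
    rw [card_neighborFinset_eq_degree]; exact G.minDegree_le_degree v
  obtain ⟨N', hN'sub, hN'card⟩ := Finset.exists_subset_card_eq hdeg
  have hvN' : v ∉ N' := fun h => G.notMem_neighborFinset_self v (hN'sub h)
  set T : Finset V := insert v N' with hT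
  have hstep1 : ∑ A ∈ (univ : Finset V).powerset, Wt p q univ A *
        (if v ∉ A ∧ (G.neighborFinset v ∩ A).card < k then (1:ℝ) else 0) ≤
      ∑ A ∈ (univ : Finset V).powerset, Wt p q univ A *
        (if v ∉ A ∧ (N' ∩ A).card < k then (1:ℝ) else 0) := by
    refine sum_le_sum fun A _ => ?_
    refine mul_le_mul_of_nonneg_left ?_ (Wt_nonneg hp hq _ _)
    by_cases h : v ∉ A ∧ (G.neighborFinset v ∩ A).card < k
    · rw [if_pos h, if_pos ⟨h.1, lt_of_le_of_lt
        (card_le_card (inter_subset_inter hN'sub le_rfl)) h.2⟩]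
    · rw [if_neg h]
      split <;> norm_num
  refine hstep1.trans ?_
  have hN'T : N' ⊆ T := subset_insert v N'
  have hcongr : ∀ A ∈ (univ : Finset V).powerset,
      Wt p q univ A * (if v ∉ A ∧ (N' ∩ A).card < k then (1:ℝ) else 0) =
      Wt p q univ A * (if v ∉ (A ∩ T) ∧ (N' ∩ (A ∩ T)).card < k then (1:ℝ) else 0) := by
    intro A _
    have h1 : v ∉ A ↔ v ∉ A ∩ T := by simp [hT]
    have h2 : N' ∩ (A ∩ T) = N' ∩ A := by
      ext x
      simp only [mem_inter]
      constructor
      · rintro ⟨hx1, hx2, _⟩; exact ⟨hx1, hx2⟩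
      · rintro ⟨hx1, hx2⟩; exact ⟨hx1, hx2, hN'T hx1⟩
    rw [h2]
    by_cases hc : v ∉ A ∧ (N' ∩ A).card < k
    · rw [if_pos hc, if_pos ⟨h1.1 hc.1, hc.2⟩]
    · rw [if_neg hc, if_neg fun hc2 => hc ⟨h1.2 hc2.1, hc2.2⟩]
  rw [sum_congr rfl hcongr, sum_Wt_factor p q hpq T
      (fun S => if v ∉ S ∧ (N' ∩ S).card < k then (1:ℝ) else 0)]
  have hdisj : Disjoint N'.powerset (N'.powerset.image (insert v)) := by
    rw [Finset.disjoint_left]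
    rintro S hS hS'
    obtain ⟨S', _, rfl⟩ := mem_image.1 hS'
    exact hvN' (mem_powerset.1 hS (mem_insert_self v S'))
  rw [hT, powerset_insert, sum_union hdisj]
  have hzero : ∑ S ∈ N'.powerset.image (insert v),
      Wt p q (insert v N') S * (if v ∉ S ∧ (N' ∩ S).card < k then (1:ℝ) else 0) = 0 := by
    refine sum_eq_zero fun S hS => ?_
    obtain ⟨S', _, rfl⟩ := mem_image.1 hS
    rw [if_neg (by simp), mul_zero]
  rw [hzero, add_zero]
  have hfirst : ∀ S ∈ N'.powerset,
      Wt p q (insert v N') S * (if v ∉ S ∧ (N' ∩ S).card < k then (1:ℝ) else 0) =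
      q * (Wt p q N' S * (if S.card < k then (1:ℝ) else 0)) := by
    intro S hS
    rw [mem_powerset] at hS
    have hvS : v ∉ S := fun h => hvN' (hS h)
    have hWt : Wt p q (insert v N') S = q * Wt p q N' S := by
      rw [Wt, prod_insert hvN', if_neg hvS]; rfl
    rw [hWt, inter_eq_right.2 hS]
    have : (v ∉ S ∧ S.card < k) ↔ S.card < k := by
      constructor
      · exact fun h => h.2
      · exact fun h => ⟨hvS, h⟩
    rw [if_congr this rfl rfl, mul_assoc]
  rw [sum_congr rfl hfirst, ← mul_sum]
  refine mul_le_mul_of_nonneg_left ?_ hq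
  have hsf : ∑ S ∈ N'.powerset, Wt p q N' S * (if S.card < k then (1:ℝ) else 0) =
      ∑ S ∈ N'.powerset.filter (fun S => S.card < k), Wt p q N' S := by
    rw [sum_filter]
    exact sum_congr rfl fun S _ => by split <;> simp
  rw [hsf, sum_Wt_card_lt, hN'card]
  have := binom_tail_ineq (p := p) (q := q) δ k hk hδ hp hq hpq
  exact this

lemma sum_Wt_mem {V : Type*} [Fintype V] [DecidableEq V] {p q : ℝ} (hpq : p + q = 1) (v : V) :
    ∑ A ∈ (univ : Finset V).powerset, Wt p q univ A * (if v ∈ A then (1:ℝ) else 0) = p := by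
  have hcongr : ∀ A ∈ (univ : Finset V).powerset,
      Wt p q univ A * (if v ∈ A then (1:ℝ) else 0) =
      Wt p q univ A * (if v ∈ A ∩ {v} then (1:ℝ) else 0) := by
    intro A _
    congr 1
    by_cases h : v ∈ A <;> simp [h]
  rw [sum_congr rfl hcongr,
    sum_Wt_factor p q hpq {v} (fun S => if v ∈ S then (1:ℝ) else 0)]
  have hps : ({v} : Finset V).powerset = {∅, {v}} := by
    ext S
    simp [subset_singleton_iff, mem_insert]
  have hne : (∅ : Finset V) ≠ {v} := (singleton_ne_empty v).symm
  rw [hps, sum_pair hne]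
  have h1 : Wt p q {v} (∅ : Finset V) = q := by simp [Wt]
  have h2 : Wt p q {v} ({v} : Finset V) = p := by simp [Wt]
  simp [h1, h2]

lemma sum_Wt_card' {V : Type*} [Fintype V] [DecidableEq V] {p q : ℝ} (hpq : p + q = 1) :
    ∑ A ∈ (univ : Finset V).powerset, Wt p q univ A * (A.card : ℝ) =
      (Fintype.card V : ℝ) * p := by
  have key : ∀ A ∈ (univ : Finset V).powerset,
      Wt p q univ A * (A.card : ℝ) =
        ∑ v : V, Wt p q univ A * (if v ∈ A then (1:ℝ) else 0) := by
    intro A hA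
    rw [← mul_sum]
    congr 1
    rw [sum_boole]
    congr 1
    rw [filter_mem_eq_inter, univ_inter]
  rw [sum_congr rfl key, sum_comm]
  rw [sum_congr rfl fun v _ => sum_Wt_mem hpq v, sum_const, card_univ, nsmul_eq_mul]

lemma union_under_dominates {V : Type*} [Fintype V] [DecidableEq V]
    (G : SimpleGraph V) [DecidableRel G.Adj] (k : ℕ) (A : Finset V) :
    kDominating G k
      ↑(A ∪ univ.filter (fun v => v ∉ A ∧ (G.neighborFinset v ∩ A).card < k)) := by
  intro v hv
  rw [coe_union, Set.mem_union] at hv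
  push_neg at hv
  obtain ⟨hvA, hvU⟩ := hv
  rw [mem_coe] at hvA
  have hvU' : ¬ (v ∉ A ∧ (G.neighborFinset v ∩ A).card < k) := by
    intro h
    exact hvU (by rw [mem_coe, mem_filter]; exact ⟨mem_univ v, h⟩)
  have hk : k ≤ (G.neighborFinset v ∩ A).card := by
    by_contra h
    exact hvU' ⟨hvA, lt_of_not_ge h⟩
  have hcoe : (↑(G.neighborFinset v ∩ A) : Set V) = G.neighborSet v ∩ ↑A := by
    rw [coe_inter, SimpleGraph.neighborFinset_def, Set.coe_toFinset]
  calc k ≤ (G.neighborFinset v ∩ A).card := hk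
    _ = (↑(G.neighborFinset v ∩ A) : Set V).ncard := (Set.ncard_coe_finset _).symm
    _ ≤ (G.neighborSet v ∩
          ↑(A ∪ univ.filter (fun v => v ∉ A ∧ (G.neighborFinset v ∩ A).card < k))).ncard := by
        refine Set.ncard_le_ncard ?_ (Set.toFinite _)
        rw [hcoe, coe_union]
        exact Set.inter_subset_inter le_rfl (Set.subset_union_left)

/-- Theorem (Gagarin–Poghosyan–Zverovich 2013): for `δ ≥ k`,
`γ_k(G) ≤ (1 − δ'/(b^{1/δ'} (1+δ')^{1+1/δ'})) n` with `δ' = δ − k + 1`, `b = C(δ, k−1)`. -/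
theorem kDominationNumber_upper_bound {V : Type*} [Fintype V] [Nonempty V]
    (G : SimpleGraph V) [DecidableRel G.Adj] (k : ℕ) (hk : 1 ≤ k)
    (hδ : k ≤ G.minDegree) :
    (kDominationNumber G k : ℝ) ≤
      (1 - ((G.minDegree - k + 1 : ℕ) : ℝ) /
          (((G.minDegree.choose (k - 1) : ℕ) : ℝ) ^
              ((1 : ℝ) / ((G.minDegree - k + 1 : ℕ) : ℝ)) *
            (1 + ((G.minDegree - k + 1 : ℕ) : ℝ)) ^
              (1 + (1 : ℝ) / ((G.minDegree - k + 1 : ℕ) : ℝ)))) *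
        (Fintype.card V : ℝ) := by
  classical
  set δ := G.minDegree with hδdef
  set d' : ℕ := δ - k + 1 with hd'
  set b : ℕ := δ.choose (k - 1) with hb
  have hd'1 : 1 ≤ d' := by omega
  have hb1 : 1 ≤ b := Nat.choose_pos (by omega)
  set D : ℝ := ((d' : ℕ) : ℝ) with hD
  set B : ℝ := ((b : ℕ) : ℝ) with hB
  have hD1 : (1:ℝ) ≤ D := by rw [hD]; exact_mod_cast hd'1
  have hB1 : (1:ℝ) ≤ B := by rw [hB]; exact_mod_cast hb1
  have hD0 : (0:ℝ) < D := by linarith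
  have h1D : (0:ℝ) < 1 + D := by linarith
  have hbase : (1:ℝ) ≤ B * (1 + D) := by nlinarith
  have hbase0 : (0:ℝ) < B * (1 + D) := by linarith
  set q : ℝ := (B * (1 + D)) ^ (-((1:ℝ)/D)) with hqdef
  have hq0 : 0 ≤ q := Real.rpow_nonneg hbase0.le _
  have hq1 : q ≤ 1 :=
    Real.rpow_le_one_of_one_le_of_nonpos hbase (neg_nonpos.2 (by positivity))
  set p : ℝ := 1 - q with hpdef
  have hp0 : 0 ≤ p := by simp only [hpdef]; linarith
  have hpq : p + q = 1 := by simp only [hpdef]; ring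
  have hqd : q ^ d' = (B * (1 + D))⁻¹ := by
    rw [hqdef, ← Real.rpow_natCast ((B * (1 + D)) ^ (-((1:ℝ)/D))) d',
      ← Real.rpow_mul hbase0.le]
    rw [show (-((1:ℝ)/D)) * ((d' : ℕ) : ℝ) = -1 by rw [← hD, neg_mul, one_div, inv_mul_cancel₀ hD0.ne']]
    exact Real.rpow_neg_one _
  -- the random set plus uncovered vertices
  set U : Finset V → Finset V :=
    fun A => univ.filter (fun v => v ∉ A ∧ (G.neighborFinset v ∩ A).card < k) with hU
  have hdom : ∀ A : Finset V,
      (kDominationNumber G k : ℝ) ≤ (A.card : ℝ) + ((U A).card : ℝ) := by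
    intro A
    have h1 : kDominationNumber G k ≤ (A ∪ U A).card :=
      Nat.sInf_le ⟨↑(A ∪ U A), union_under_dominates G k A, Set.ncard_coe_finset _⟩
    have h2 := card_union_le A (U A)
    exact_mod_cast le_trans h1 h2
  have hsum1 : ∑ A ∈ (univ : Finset V).powerset, Wt p q univ A = 1 := by
    rw [sum_Wt, hpq, one_pow]
  have hmain : (kDominationNumber G k : ℝ) ≤
      ∑ A ∈ (univ : Finset V).powerset,
        Wt p q univ A * ((A.card : ℝ) + ((U A).card : ℝ)) := by
    calc (kDominationNumber G k : ℝ)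
        = ∑ A ∈ (univ : Finset V).powerset,
            Wt p q univ A * (kDominationNumber G k : ℝ) := by
          rw [← sum_mul, hsum1, one_mul]
      _ ≤ _ := sum_le_sum fun A _ =>
          mul_le_mul_of_nonneg_left (hdom A) (Wt_nonneg hp0 hq0 _ _)
  set n : ℝ := (Fintype.card V : ℝ) with hn
  have hEU : ∑ A ∈ (univ : Finset V).powerset, Wt p q univ A * ((U A).card : ℝ) ≤
      n * (q * (B * q ^ d')) := by
    have hcard : ∀ A : Finset V, ((U A).card : ℝ) =
        ∑ v : V, (if v ∉ A ∧ (G.neighborFinset v ∩ A).card < k then (1:ℝ) else 0) := by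
      intro A
      rw [sum_boole, hU]
    calc ∑ A ∈ (univ : Finset V).powerset, Wt p q univ A * ((U A).card : ℝ)
        = ∑ v : V, ∑ A ∈ (univ : Finset V).powerset, Wt p q univ A *
            (if v ∉ A ∧ (G.neighborFinset v ∩ A).card < k then (1:ℝ) else 0) := by
          rw [← sum_comm]
          refine sum_congr rfl fun A _ => ?_
          rw [hcard A, mul_sum]
      _ ≤ ∑ _v : V, q * (B * q ^ d') := by
          refine sum_le_sum fun v _ => ?_
          exact prob_undercover hp0 hq0 hpq G k hk hδ v
      _ = n * (q * (B * q ^ d')) := by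
          rw [sum_const, card_univ, nsmul_eq_mul, hn]
  have hEA : ∑ A ∈ (univ : Finset V).powerset, Wt p q univ A * ((A.card : ℝ))
      = n * p := sum_Wt_card' hpq
  have htot : (kDominationNumber G k : ℝ) ≤ n * (1 - q * D / (1 + D)) := by
    have hsplit : ∑ A ∈ (univ : Finset V).powerset,
        Wt p q univ A * ((A.card : ℝ) + ((U A).card : ℝ)) =
        (∑ A ∈ (univ : Finset V).powerset, Wt p q univ A * (A.card : ℝ)) +
        ∑ A ∈ (univ : Finset V).powerset, Wt p q univ A * ((U A).card : ℝ) := by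
      rw [← sum_add_distrib]
      exact sum_congr rfl fun A _ => by ring
    have hqBq : q * (B * q ^ d') = q / (1 + D) := by
      rw [hqd]
      field_simp
    have hfin : n * p + n * (q * (B * q ^ d')) = n * (1 - q * D / (1 + D)) := by
      rw [hqBq, hpdef]
      field_simp
      ring
    calc (kDominationNumber G k : ℝ)
        ≤ _ := hmain
      _ = _ := hsplit
      _ ≤ n * p + n * (q * (B * q ^ d')) := by rw [hEA]; linarith [hEU]
      _ = n * (1 - q * D / (1 + D)) := hfin
  have hq_eq : q * D / (1 + D) = D / (B ^ ((1:ℝ)/D) * (1 + D) ^ (1 + (1:ℝ)/D)) := by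
    have hBt : (0:ℝ) < B ^ ((1:ℝ)/D) := Real.rpow_pos_of_pos (by linarith) _
    have hDt : (0:ℝ) < (1 + D) ^ ((1:ℝ)/D) := Real.rpow_pos_of_pos h1D _
    have hqex : q = (B ^ ((1:ℝ)/D) * (1 + D) ^ ((1:ℝ)/D))⁻¹ := by
      rw [hqdef, Real.rpow_neg hbase0.le, Real.mul_rpow (by linarith) h1D.le]
    have hsplitexp : (1 + D) ^ (1 + (1:ℝ)/D) = (1 + D) * (1 + D) ^ ((1:ℝ)/D) := by
      rw [Real.rpow_add h1D, Real.rpow_one]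
    rw [hqex, hsplitexp]
    field_simp
  rw [mul_comm]
  rw [← hq_eq]
  exact htot
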